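/- arXiv:2202.08923 — 3 statements merged into one kernel-verified Lean document; each statement's English description precedes it below -/
import Mathlib

section
/- For k ∈ (0,1) and x ≥ 0, the function g(x) = ω⁻¹ arctan(ωx) − arcsc(x,k) is nonnegative, where ω = π/(2K(k)) and arcsc(x,k) = ∫₀ˣ dt/(√(1+t²)·√(1+k'²t²)) with k' = √(1−k²). -/
open Real

/-- The complete elliptic integral of the first kind. -/
noncomputable def ellipticK (k : ℝ) : ℝ :=
  ∫ θ in (0:ℝ)..(π/2), (Real.sqrt (1 - k^2 * (Real.sin θ)^2))⁻¹

/-- The inverse Jacobi sc function: `arcsc(x,k) = ∫₀ˣ dt/(√(1+t²)·√(1+k'²t²))`,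
where `k'² = 1 - k²`. -/
noncomputable def arcsc (x k : ℝ) : ℝ :=
  ∫ t in (0:ℝ)..x, (Real.sqrt (1 + t^2) * Real.sqrt (1 + (1 - k^2) * t^2))⁻¹

section aux

variable {k : ℝ}

private lemma denomE_pos (hk : k ∈ Set.Ioo (0:ℝ) 1) (θ : ℝ) :
    0 < 1 - k^2 * (Real.sin θ)^2 := by
  obtain ⟨hk0, hk1⟩ := hk
  nlinarith [Real.sin_sq_le_one θ, sq_nonneg (Real.sin θ)]

private lemma E_cont (hk : k ∈ Set.Ioo (0:ℝ) 1) :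
    Continuous fun θ : ℝ => (Real.sqrt (1 - k^2 * (Real.sin θ)^2))⁻¹ := by
  apply Continuous.inv₀
  · exact (continuous_const.sub (continuous_const.mul
      ((Real.continuous_sin).pow 2))).sqrt
  · intro θ
    exact (Real.sqrt_pos.2 (denomE_pos hk θ)).ne'

private lemma denomG_pos {ω : ℝ} (hω : 0 < ω) (hω1 : ω ≤ 1) (θ : ℝ) :
    0 < (Real.cos θ)^2 + ω^2 * (Real.sin θ)^2 := by
  have h1 : ω^2 ≤ 1 := by nlinarith
  have h2 : 0 ≤ (1 - ω^2) * (Real.cos θ)^2 := mul_nonneg (by linarith) (sq_nonneg _)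
  nlinarith [Real.sin_sq_add_cos_sq θ, mul_pos hω hω]

private lemma G_cont {ω : ℝ} (hω : 0 < ω) (hω1 : ω ≤ 1) :
    Continuous fun θ : ℝ => ((Real.cos θ)^2 + ω^2 * (Real.sin θ)^2)⁻¹ := by
  apply Continuous.inv₀
  · exact ((Real.continuous_cos.pow 2).add (continuous_const.mul
      (Real.continuous_sin.pow 2)))
  · intro θ
    exact (denomG_pos hω hω1 θ).ne'

/-- Fundamental theorem of calculus for the comparison integrand. -/
private lemma ftc_g {ω : ℝ} (hω : 0 < ω) (hω1 : ω ≤ 1) {φ : ℝ} (hφ0 : 0 ≤ φ)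
    (hφ : φ < π/2) :
    ∫ θ in (0:ℝ)..φ, ((Real.cos θ)^2 + ω^2 * (Real.sin θ)^2)⁻¹
      = ω⁻¹ * Real.arctan (ω * Real.tan φ) := by
  have key : ∀ t ∈ Set.uIcc (0:ℝ) φ,
      HasDerivAt (fun u => ω⁻¹ * Real.arctan (ω * Real.tan u))
        (((Real.cos t)^2 + ω^2 * (Real.sin t)^2)⁻¹) t := by
    intro t ht
    rw [Set.uIcc_of_le hφ0] at ht
    have hcos : 0 < Real.cos t := by
      apply Real.cos_pos_of_mem_Ioo
      constructor
      · linarith [ht.1, Real.pi_pos]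
      · exact lt_of_le_of_lt ht.2 hφ
    have hd : HasDerivAt (fun u => ω⁻¹ * Real.arctan (ω * Real.tan u))
        (ω⁻¹ * ((1 / (1 + (ω * Real.tan t)^2)) * (ω * (1 / Real.cos t ^ 2)))) t := by
      exact (((Real.hasDerivAt_arctan (ω * Real.tan t)).comp t
        ((Real.hasDerivAt_tan hcos.ne').const_mul ω)).const_mul ω⁻¹)
    convert hd using 1
    have h1 : (1 + (ω * Real.tan t)^2) * Real.cos t ^ 2
        = (Real.cos t)^2 + ω^2 * (Real.sin t)^2 := by
      rw [Real.tan_eq_sin_div_cos]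
      field_simp
    have h2 : (0:ℝ) < 1 + (ω * Real.tan t)^2 := by positivity
    rw [← h1]
    field_simp
  rw [intervalIntegral.integral_eq_sub_of_hasDerivAt key
    ((G_cont hω hω1).intervalIntegrable _ _)]
  simp [Real.tan_zero, Real.arctan_zero]

/-- Total integral of the comparison integrand over `[0, π/2]`. -/
private lemma g_total {ω : ℝ} (hω : 0 < ω) (hω1 : ω ≤ 1) :
    ∫ θ in (0:ℝ)..(π/2), ((Real.cos θ)^2 + ω^2 * (Real.sin θ)^2)⁻¹
      = ω⁻¹ * (π/2) := by
  have hcont := G_cont hω hω1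
  have hprim : Continuous fun b : ℝ =>
      ∫ θ in (0:ℝ)..b, ((Real.cos θ)^2 + ω^2 * (Real.sin θ)^2)⁻¹ :=
    intervalIntegral.continuous_primitive (fun a b => hcont.intervalIntegrable a b) 0
  -- limit of the primitive along 𝓝[<] (π/2)
  have h1 : Filter.Tendsto (fun b : ℝ =>
      ∫ θ in (0:ℝ)..b, ((Real.cos θ)^2 + ω^2 * (Real.sin θ)^2)⁻¹)
      (nhdsWithin (π/2) (Set.Iio (π/2)))
      (nhds (∫ θ in (0:ℝ)..(π/2), ((Real.cos θ)^2 + ω^2 * (Real.sin θ)^2)⁻¹)) :=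
    (hprim.tendsto _).mono_left nhdsWithin_le_nhds
  -- limit of ω⁻¹ * arctan (ω * tan b)
  have h2 : Filter.Tendsto (fun b : ℝ => ω⁻¹ * Real.arctan (ω * Real.tan b))
      (nhdsWithin (π/2) (Set.Iio (π/2))) (nhds (ω⁻¹ * (π/2))) := by
    apply Filter.Tendsto.const_mul
    have htan : Filter.Tendsto (fun b : ℝ => ω * Real.tan b)
        (nhdsWithin (π/2) (Set.Iio (π/2))) Filter.atTop :=
      (Real.tendsto_tan_pi_div_two).const_mul_atTop hω
    exact (Real.tendsto_arctan_atTop.mono_right nhdsWithin_le_nhds).comp htan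
  -- the two functions agree eventually on 𝓝[<] (π/2)
  have heq : ∀ᶠ b in nhdsWithin (π/2) (Set.Iio (π/2)),
      (∫ θ in (0:ℝ)..b, ((Real.cos θ)^2 + ω^2 * (Real.sin θ)^2)⁻¹)
        = ω⁻¹ * Real.arctan (ω * Real.tan b) := by
    have hmem : Set.Ioo (0:ℝ) (π/2) ∈ nhdsWithin (π/2) (Set.Iio (π/2)) := by
      apply mem_nhdsWithin.2
      exact ⟨Set.Ioi 0, isOpen_Ioi, Set.mem_Ioi.2 (by positivity), by
        rintro b ⟨hb1, hb2⟩; exact ⟨hb1, hb2⟩⟩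
    filter_upwards [hmem] with b hb
    exact ftc_g hω hω1 hb.1.le hb.2
  have h1' : Filter.Tendsto (fun b : ℝ => ω⁻¹ * Real.arctan (ω * Real.tan b))
      (nhdsWithin (π/2) (Set.Iio (π/2)))
      (nhds (∫ θ in (0:ℝ)..(π/2), ((Real.cos θ)^2 + ω^2 * (Real.sin θ)^2)⁻¹)) :=
    h1.congr' heq
  have hne : (nhdsWithin (π/2) (Set.Iio (π/2))).NeBot := by
    apply nhdsLT_neBot
  exact tendsto_nhds_unique h1' h2

/-- Substitution `t = tan θ` in the `arcsc` integral. -/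
private lemma arcsc_eq (hk : k ∈ Set.Ioo (0:ℝ) 1) {x : ℝ} (hx : 0 ≤ x) :
    arcsc x k = ∫ θ in (0:ℝ)..(Real.arctan x), (Real.sqrt (1 - k^2 * (Real.sin θ)^2))⁻¹ := by
  obtain ⟨hk0, hk1⟩ := hk
  have hk2 : (0:ℝ) ≤ 1 - k^2 := by nlinarith
  have hgcont : Continuous fun t : ℝ =>
      (Real.sqrt (1 + t^2) * Real.sqrt (1 + (1 - k^2) * t^2))⁻¹ := by
    apply Continuous.inv₀
    · exact ((continuous_const.add (continuous_pow 2)).sqrt.mul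
        ((continuous_const.add (continuous_const.mul (continuous_pow 2))).sqrt))
    · intro t
      have h1 : (0:ℝ) < 1 + t^2 := by positivity
      have h2 : (0:ℝ) < 1 + (1 - k^2) * t^2 := by nlinarith [sq_nonneg t]
      exact (mul_pos (Real.sqrt_pos.2 h1) (Real.sqrt_pos.2 h2)).ne'
  have hφ0 : 0 ≤ Real.arctan x := by
    rw [← Real.arctan_zero]
    exact Real.arctan_strictMono.monotone hx
  have hφlt : Real.arctan x < π/2 := Real.arctan_lt_pi_div_two x
  have hderiv : ∀ θ ∈ Set.uIcc (0:ℝ) (Real.arctan x),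
      HasDerivAt Real.tan (1 / Real.cos θ ^ 2) θ := by
    intro θ hθ
    rw [Set.uIcc_of_le hφ0] at hθ
    have hcos : 0 < Real.cos θ := by
      apply Real.cos_pos_of_mem_Ioo
      exact ⟨by linarith [hθ.1, Real.pi_pos], lt_of_le_of_lt hθ.2 hφlt⟩
    exact Real.hasDerivAt_tan hcos.ne'
  have hd'cont : ContinuousOn (fun θ => 1 / Real.cos θ ^ 2)
      (Set.uIcc (0:ℝ) (Real.arctan x)) := by
    apply ContinuousOn.div continuousOn_const
    · exact (Real.continuous_cos.pow 2).continuousOn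
    · intro θ hθ
      rw [Set.uIcc_of_le hφ0] at hθ
      have hcos : 0 < Real.cos θ := by
        apply Real.cos_pos_of_mem_Ioo
        exact ⟨by linarith [hθ.1, Real.pi_pos], lt_of_le_of_lt hθ.2 hφlt⟩
      positivity
  have hsub := intervalIntegral.integral_comp_smul_deriv hderiv hd'cont hgcont
  rw [Real.tan_zero, Real.tan_arctan] at hsub
  rw [arcsc, ← hsub]
  apply intervalIntegral.integral_congr
  intro θ hθ
  rw [Set.uIcc_of_le hφ0] at hθ
  have hcos : 0 < Real.cos θ := by
    apply Real.cos_pos_of_mem_Ioo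
    exact ⟨by linarith [hθ.1, Real.pi_pos], lt_of_le_of_lt hθ.2 hφlt⟩
  have hs1 : Real.sqrt (1 + Real.tan θ^2) = (Real.cos θ)⁻¹ := by
    have : (1:ℝ) + Real.tan θ^2 = ((Real.cos θ)⁻¹)^2 := by
      rw [Real.tan_eq_sin_div_cos]
      field_simp
      exact Real.cos_sq_add_sin_sq θ
    rw [this, Real.sqrt_sq (by positivity)]
  have hs2 : Real.sqrt (1 + (1 - k^2) * Real.tan θ^2)
      = Real.sqrt (1 - k^2 * (Real.sin θ)^2) / Real.cos θ := by
    have harg : (1:ℝ) + (1 - k^2) * Real.tan θ^2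
        = (1 - k^2 * (Real.sin θ)^2) / (Real.cos θ)^2 := by
      rw [Real.tan_eq_sin_div_cos]
      field_simp
      nlinarith [Real.sin_sq_add_cos_sq θ]
    rw [harg, Real.sqrt_div' _ (sq_nonneg _), Real.sqrt_sq hcos.le]
  have hE : 0 < Real.sqrt (1 - k^2 * (Real.sin θ)^2) :=
    Real.sqrt_pos.2 (denomE_pos ⟨hk0, hk1⟩ θ)
  show (1 / Real.cos θ ^ 2) • (Real.sqrt (1 + Real.tan θ^2)
      * Real.sqrt (1 + (1 - k^2) * Real.tan θ^2))⁻¹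
      = (Real.sqrt (1 - k^2 * (Real.sin θ)^2))⁻¹
  rw [smul_eq_mul, hs1, hs2]
  field_simp

end aux

set_option maxHeartbeats 1000000 in
/-- For `k ∈ (0,1)` and `x ≥ 0`, the function
`g(x) = ω⁻¹ arctan(ωx) − arcsc(x,k)` is nonnegative, where `ω = π/(2K(k))`. -/
theorem stmt1 (k : ℝ) (hk : k ∈ Set.Ioo (0:ℝ) 1) (x : ℝ) (hx : 0 ≤ x) :
    0 ≤ (π / (2 * ellipticK k))⁻¹ * Real.arctan ((π / (2 * ellipticK k)) * x)
        - arcsc x k := by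
  obtain ⟨hk0, hk1⟩ := hk
  set K := ellipticK k with hKdef
  -- K > π/2
  have hKgt : π/2 < K := by
    have h0 : (∫ θ in (0:ℝ)..(π/2), (1:ℝ)) = π/2 := by simp
    have hlt : (∫ θ in (0:ℝ)..(π/2), (1:ℝ))
        < ∫ θ in (0:ℝ)..(π/2), (Real.sqrt (1 - k^2 * (Real.sin θ)^2))⁻¹ := by
      apply intervalIntegral.integral_lt_integral_of_continuousOn_of_le_of_exists_lt
      · positivity
      · exact continuousOn_const
      · exact (E_cont ⟨hk0, hk1⟩).continuousOn
      · intro θ hθ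
        rw [one_le_inv_iff₀]
        exact ⟨Real.sqrt_pos.2 (denomE_pos ⟨hk0, hk1⟩ θ),
          Real.sqrt_le_one.2 (by nlinarith [sq_nonneg (Real.sin θ), sq_nonneg k])⟩
      · refine ⟨π/4, ⟨by positivity, by linarith [Real.pi_pos]⟩, ?_⟩
        rw [one_lt_inv_iff₀]
        refine ⟨Real.sqrt_pos.2 (denomE_pos ⟨hk0, hk1⟩ _), ?_⟩
        have : Real.sin (π/4) ^ 2 = 1/2 := by
          rw [Real.sin_pi_div_four]
          rw [div_pow, Real.sq_sqrt (by norm_num : (0:ℝ) ≤ 2)]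
          norm_num
        simp only [this]
        have h5 : Real.sqrt (1 - k^2 * (1/2)) < Real.sqrt 1 :=
          Real.sqrt_lt_sqrt (by nlinarith) (by nlinarith)
        simpa using h5
    rw [h0] at hlt
    rw [hKdef, ellipticK]
    exact hlt
  have hKpos : (0:ℝ) < K := lt_trans (by positivity) hKgt
  set ω := π / (2 * K) with hωdef
  have hωpos : 0 < ω := by positivity
  have hω1 : ω < 1 := by
    rw [hωdef, div_lt_one (by positivity)]
    linarith
  have hω1' : ω ≤ 1 := hω1.le
  -- notation
  set E : ℝ → ℝ := fun θ => (Real.sqrt (1 - k^2 * (Real.sin θ)^2))⁻¹ with hE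
  set g : ℝ → ℝ := fun θ => ((Real.cos θ)^2 + ω^2 * (Real.sin θ)^2)⁻¹ with hg
  set φ := Real.arctan x with hφdef
  have hφ0 : 0 ≤ φ := by
    rw [hφdef, ← Real.arctan_zero]; exact Real.arctan_strictMono.monotone hx
  have hφlt : φ < π/2 := Real.arctan_lt_pi_div_two x
  -- rewrite both sides as integrals over [0, φ]
  have harc : arcsc x k = ∫ θ in (0:ℝ)..φ, E θ := arcsc_eq ⟨hk0, hk1⟩ hx
  have htan : ω * x = ω * Real.tan φ := by rw [hφdef, Real.tan_arctan]
  have hlhs : (π / (2 * K))⁻¹ * Real.arctan ((π / (2 * K)) * x)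
      = ∫ θ in (0:ℝ)..φ, g θ := by
    rw [← hωdef, htan, ftc_g hωpos hω1' hφ0 hφlt]
  rw [harc, hlhs, sub_nonneg]
  -- totals
  have hEtot : (∫ θ in (0:ℝ)..(π/2), E θ) = K := by rw [hKdef, ellipticK]
  have hgtot : (∫ θ in (0:ℝ)..(π/2), g θ) = K := by
    rw [hg, g_total hωpos hω1', hωdef]
    field_simp
  -- sign lemmas: with τ = 2(1-ω²) - k², for θ ∈ [0, π/2]:
  set τ := 2*(1-ω^2) - k^2 with hτ
  have signA : ∀ θ : ℝ, 0 ≤ Real.sin θ → (1-ω^2)^2 * (Real.sin θ)^2 ≤ τ → E θ ≤ g θ := by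
    intro θ hs0 hQ
    have hcs : (Real.cos θ)^2 = 1 - (Real.sin θ)^2 := by
      nlinarith [Real.sin_sq_add_cos_sq θ]
    have hdg : 0 < (Real.cos θ)^2 + ω^2 * (Real.sin θ)^2 := denomG_pos hωpos hω1' θ
    have hkey : (Real.cos θ)^2 + ω^2 * (Real.sin θ)^2
        ≤ Real.sqrt (1 - k^2 * (Real.sin θ)^2) := by
      apply Real.le_sqrt_of_sq_le
      rw [hcs]
      have hmul := mul_le_mul_of_nonneg_right hQ (sq_nonneg (Real.sin θ))
      nlinarith [sq_nonneg (Real.sin θ)]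
    rw [hE, hg]
    exact inv_anti₀ hdg hkey
  have signB : ∀ θ : ℝ, 0 ≤ Real.sin θ → Real.sin θ ≤ 1 →
      τ ≤ (1-ω^2)^2 * (Real.sin θ)^2 → g θ ≤ E θ := by
    intro θ hs0 hs1 hQ
    have hcs : (Real.cos θ)^2 = 1 - (Real.sin θ)^2 := by
      nlinarith [Real.sin_sq_add_cos_sq θ]
    have hdE : 0 < 1 - k^2 * (Real.sin θ)^2 := denomE_pos ⟨hk0, hk1⟩ θ
    have hkey : Real.sqrt (1 - k^2 * (Real.sin θ)^2)
        ≤ (Real.cos θ)^2 + ω^2 * (Real.sin θ)^2 := by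
      rw [Real.sqrt_le_iff, hcs]
      constructor
      · nlinarith [sq_nonneg (Real.sin θ), mul_pos hωpos hωpos]
      · have hmul := mul_le_mul_of_nonneg_right hQ (sq_nonneg (Real.sin θ))
        nlinarith [sq_nonneg (Real.sin θ)]
    rw [hE, hg]
    exact inv_anti₀ (Real.sqrt_pos.2 hdE) hkey
  -- integrability
  have hEint : ∀ a b : ℝ, IntervalIntegrable E MeasureTheory.volume a b :=
    fun a b => (E_cont ⟨hk0, hk1⟩).intervalIntegrable a b
  have hgint : ∀ a b : ℝ, IntervalIntegrable g MeasureTheory.volume a b :=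
    fun a b => (G_cont hωpos hω1').intervalIntegrable a b
  -- case split on crossing
  rcases le_or_gt ((1-ω^2)^2 * (Real.sin φ)^2) τ with hcase | hcase
  · -- integrand comparison on [0, φ]
    apply intervalIntegral.integral_mono_on hφ0 (hEint 0 φ) (hgint 0 φ)
    intro θ hθ
    have hsθ : 0 ≤ Real.sin θ :=
      Real.sin_nonneg_of_nonneg_of_le_pi hθ.1 (by linarith [Real.pi_pos, hθ.2, hφlt])
    have hmono : Real.sin θ ≤ Real.sin φ := by
      apply Real.strictMonoOn_sin.monotoneOn
      · exact ⟨by linarith [hθ.1, Real.pi_pos], by linarith [hθ.2, hφlt]⟩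
      · exact ⟨by linarith [Real.pi_pos], hφlt.le⟩
      · exact hθ.2
    apply signA θ hsθ
    calc (1-ω^2)^2 * (Real.sin θ)^2 ≤ (1-ω^2)^2 * (Real.sin φ)^2 := by
          apply mul_le_mul_of_nonneg_left _ (sq_nonneg _)
          exact pow_le_pow_left₀ hsθ hmono 2
      _ ≤ τ := hcase
  · -- use the total integrals
    have hsplitE := intervalIntegral.integral_add_adjacent_intervals
      (hEint 0 φ) (hEint φ (π/2))
    have hsplitg := intervalIntegral.integral_add_adjacent_intervals
      (hgint 0 φ) (hgint φ (π/2))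
    have htail : (∫ θ in φ..(π/2), g θ) ≤ ∫ θ in φ..(π/2), E θ := by
      apply intervalIntegral.integral_mono_on hφlt.le (hgint φ (π/2)) (hEint φ (π/2))
      intro θ hθ
      have hsθ0 : 0 ≤ Real.sin θ :=
        Real.sin_nonneg_of_nonneg_of_le_pi (le_trans hφ0 hθ.1)
          (by linarith [Real.pi_pos, hθ.2])
      have hsθ1 : Real.sin θ ≤ 1 := Real.sin_le_one θ
      have hsφ0 : 0 ≤ Real.sin φ :=
        Real.sin_nonneg_of_nonneg_of_le_pi hφ0 (by linarith [Real.pi_pos])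
      have hmono : Real.sin φ ≤ Real.sin θ := by
        apply Real.strictMonoOn_sin.monotoneOn
        · exact ⟨by linarith [Real.pi_pos], hφlt.le⟩
        · exact ⟨by linarith [hθ.1, Real.pi_pos], hθ.2⟩
        · exact hθ.1
      apply signB θ hsθ0 hsθ1
      calc τ ≤ (1-ω^2)^2 * (Real.sin φ)^2 := hcase.le
        _ ≤ (1-ω^2)^2 * (Real.sin θ)^2 := by
            apply mul_le_mul_of_nonneg_left _ (sq_nonneg _)
            exact pow_le_pow_left₀ hsφ0 hmono 2
    have : (∫ θ in (0:ℝ)..φ, E θ) = K - ∫ θ in φ..(π/2), E θ := by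
      rw [← hEtot, ← hsplitE]; ring
    rw [this]
    have : (∫ θ in (0:ℝ)..φ, g θ) = K - ∫ θ in φ..(π/2), g θ := by
      rw [← hgtot, ← hsplitg]; ring
    rw [this]
    linarith
end

section
/- Let q : [0,b] → ℝ be continuous with q(t) ≥ 0 on [0,b] and q(t) ≥ λ² on [c,b] for some λ > 0 and c ∈ [0,b). Let u solve u'' = q·u on [0,b] with initial conditions u(0)=1, u'(0)=0 (or u(0)=0, u'(0)=1). Then u(t) > 0 and u'(t) ≥ 0 for t ∈ (0,b], and u(t)/u(b) ≤ 2·e^{−λ(b−c)} for all t ∈ [0,c]. -/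
open Real

/-- Helper: monotonicity from `HasDerivAt` with nonnegative derivative. -/
lemma monoAux {a b : ℝ} {f f' : ℝ → ℝ}
    (hf : ∀ t ∈ Set.Icc a b, HasDerivAt f (f' t) t)
    (h0 : ∀ t ∈ Set.Ioo a b, 0 ≤ f' t) : MonotoneOn f (Set.Icc a b) := by
  apply monotoneOn_of_deriv_nonneg (convex_Icc a b)
    (fun x hx => (hf x hx).continuousAt.continuousWithinAt)
  · intro x hx
    rw [interior_Icc] at hx
    exact (hf x (Set.mem_Icc_of_Ioo hx)).differentiableAt.differentiableWithinAt
  · intro x hx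
    rw [interior_Icc] at hx
    rw [(hf x (Set.mem_Icc_of_Ioo hx)).deriv]
    exact h0 x hx

/-- Helper: strict monotonicity from `HasDerivAt` with positive derivative. -/
lemma strictMonoAux {a b : ℝ} {f f' : ℝ → ℝ}
    (hf : ∀ t ∈ Set.Icc a b, HasDerivAt f (f' t) t)
    (h0 : ∀ t ∈ Set.Ioo a b, 0 < f' t) : StrictMonoOn f (Set.Icc a b) := by
  apply strictMonoOn_of_deriv_pos (convex_Icc a b)
    (fun x hx => (hf x hx).continuousAt.continuousWithinAt)
  intro x hx
  rw [interior_Icc] at hx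
  rw [(hf x (Set.mem_Icc_of_Ioo hx)).deriv]
  exact h0 x hx

/-- Let `q : [0,b] → ℝ` be continuous with `q ≥ 0` on `[0,b]` and `q ≥ λ²` on `[c,b]`
for some `λ > 0` and `c ∈ [0,b)`.  If `u` solves `u'' = q·u` on `[0,b]` with
`u(0) = 1, u'(0) = 0` or `u(0) = 0, u'(0) = 1`, then `u(t) > 0` and `u'(t) ≥ 0`
for `t ∈ (0,b]`, and `u(t)/u(b) ≤ 2·exp(−λ(b−c))` for all `t ∈ [0,c]`. -/
theorem stmt5 (b c lam : ℝ) (hb : 0 < b) (hc : c ∈ Set.Ico 0 b) (hlam : 0 < lam)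
    (q u u' : ℝ → ℝ)
    (hq : ContinuousOn q (Set.Icc 0 b))
    (hq0 : ∀ t ∈ Set.Icc 0 b, 0 ≤ q t)
    (hqc : ∀ t ∈ Set.Icc c b, lam^2 ≤ q t)
    (hu1 : ∀ t ∈ Set.Icc 0 b, HasDerivAt u (u' t) t)
    (hu2 : ∀ t ∈ Set.Icc 0 b, HasDerivAt u' (q t * u t) t)
    (hinit : (u 0 = 1 ∧ u' 0 = 0) ∨ (u 0 = 0 ∧ u' 0 = 1)) :
    (∀ t ∈ Set.Ioc 0 b, 0 < u t ∧ 0 ≤ u' t) ∧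
    (∀ t ∈ Set.Icc 0 c, u t / u b ≤ 2 * Real.exp (-lam * (b - c))) := by
  obtain ⟨hc0, hcb⟩ := hc
  have hcb' : c ≤ b := hcb.le
  have hucont : ContinuousOn u (Set.Icc 0 b) :=
    fun x hx => (hu1 x hx).continuousAt.continuousWithinAt
  have hu'cont : ContinuousOn u' (Set.Icc 0 b) :=
    fun x hx => (hu2 x hx).continuousAt.continuousWithinAt
  -- Main positivity claim
  have key : (∀ t ∈ Set.Icc 0 b, 0 ≤ u' t) ∧ (∀ t ∈ Set.Ioc 0 b, 0 < u t) ∧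
      (∀ t ∈ Set.Icc 0 b, 0 ≤ u t) := by
    rcases hinit with ⟨hA1, hA2⟩ | ⟨hB1, hB2⟩
    · -- case u 0 = 1, u' 0 = 0 : u > 0 everywhere on [0,b]
      have hupos : ∀ t ∈ Set.Icc 0 b, 0 < u t := by
        by_contra h
        push_neg at h
        obtain ⟨t₁, ht₁, ht₁u⟩ := h
        set Z := Set.Icc 0 b ∩ u ⁻¹' Set.Iic 0 with hZ
        have hZne : Z.Nonempty := ⟨t₁, ht₁, ht₁u⟩
        have hZbdd : BddBelow Z := ⟨0, fun z hz => hz.1.1⟩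
        have hZclosed : IsClosed Z :=
          hucont.preimage_isClosed_of_isClosed isClosed_Icc isClosed_Iic
        set t₀ := sInf Z with ht₀
        have ht₀Z : t₀ ∈ Z := hZclosed.csInf_mem hZne hZbdd
        have ht₀Icc : t₀ ∈ Set.Icc 0 b := ht₀Z.1
        have hut₀ : u t₀ ≤ 0 := ht₀Z.2
        have ht₀pos : 0 < t₀ := by
          rcases lt_or_eq_of_le ht₀Icc.1 with h | h
          · exact h
          · exfalso; rw [← h, hA1] at hut₀; linarith
        have hsub : Set.Icc 0 t₀ ⊆ Set.Icc 0 b :=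
          Set.Icc_subset_Icc le_rfl ht₀Icc.2
        have hlt : ∀ s ∈ Set.Ico 0 t₀, 0 < u s := by
          intro s hs
          by_contra hsu
          push_neg at hsu
          have : s ∈ Z := ⟨⟨hs.1, hs.2.le.trans ht₀Icc.2⟩, hsu⟩
          exact absurd (csInf_le hZbdd this) (not_le.mpr hs.2)
        have hmono' : MonotoneOn u' (Set.Icc 0 t₀) := by
          apply monoAux (fun t ht => hu2 t (hsub ht))
          intro t ht
          exact mul_nonneg (hq0 t (hsub (Set.mem_Icc_of_Ioo ht)))
            (hlt t ⟨ht.1.le, ht.2⟩).le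
        have hu'nn : ∀ s ∈ Set.Icc 0 t₀, 0 ≤ u' s := by
          intro s hs
          have := hmono' (Set.left_mem_Icc.mpr ht₀Icc.1) hs hs.1
          rwa [hA2] at this
        have hmonou : MonotoneOn u (Set.Icc 0 t₀) :=
          monoAux (fun t ht => hu1 t (hsub ht))
            (fun t ht => hu'nn t (Set.mem_Icc_of_Ioo ht))
        have : u 0 ≤ u t₀ :=
          hmonou (Set.left_mem_Icc.mpr ht₀Icc.1) (Set.right_mem_Icc.mpr ht₀Icc.1)
            ht₀Icc.1
        rw [hA1] at this
        linarith
      have hu'nn : ∀ t ∈ Set.Icc 0 b, 0 ≤ u' t := by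
        have hmono' : MonotoneOn u' (Set.Icc 0 b) := by
          apply monoAux hu2
          intro t ht
          exact mul_nonneg (hq0 t (Set.mem_Icc_of_Ioo ht))
            (hupos t (Set.mem_Icc_of_Ioo ht)).le
        intro t ht
        have := hmono' (Set.left_mem_Icc.mpr hb.le) ht ht.1
        rwa [hA2] at this
      exact ⟨hu'nn, fun t ht => hupos t ⟨ht.1.le, ht.2⟩,
        fun t ht => (hupos t ht).le⟩
    · -- case u 0 = 0, u' 0 = 1 : u' > 0 everywhere on [0,b]
      have hu'pos : ∀ t ∈ Set.Icc 0 b, 0 < u' t := by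
        by_contra h
        push_neg at h
        obtain ⟨t₁, ht₁, ht₁u⟩ := h
        set Z := Set.Icc 0 b ∩ u' ⁻¹' Set.Iic 0 with hZ
        have hZne : Z.Nonempty := ⟨t₁, ht₁, ht₁u⟩
        have hZbdd : BddBelow Z := ⟨0, fun z hz => hz.1.1⟩
        have hZclosed : IsClosed Z :=
          hu'cont.preimage_isClosed_of_isClosed isClosed_Icc isClosed_Iic
        set t₀ := sInf Z with ht₀
        have ht₀Z : t₀ ∈ Z := hZclosed.csInf_mem hZne hZbdd
        have ht₀Icc : t₀ ∈ Set.Icc 0 b := ht₀Z.1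
        have hut₀ : u' t₀ ≤ 0 := ht₀Z.2
        have ht₀pos : 0 < t₀ := by
          rcases lt_or_eq_of_le ht₀Icc.1 with h | h
          · exact h
          · exfalso; rw [← h, hB2] at hut₀; linarith
        have hsub : Set.Icc 0 t₀ ⊆ Set.Icc 0 b :=
          Set.Icc_subset_Icc le_rfl ht₀Icc.2
        have hlt : ∀ s ∈ Set.Ico 0 t₀, 0 < u' s := by
          intro s hs
          by_contra hsu
          push_neg at hsu
          have : s ∈ Z := ⟨⟨hs.1, hs.2.le.trans ht₀Icc.2⟩, hsu⟩
          exact absurd (csInf_le hZbdd this) (not_le.mpr hs.2)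
        have hsmono : StrictMonoOn u (Set.Icc 0 t₀) :=
          strictMonoAux (fun t ht => hu1 t (hsub ht))
            (fun t ht => hlt t ⟨ht.1.le, ht.2⟩)
        have hunn : ∀ s ∈ Set.Icc 0 t₀, 0 ≤ u s := by
          intro s hs
          rcases lt_or_eq_of_le hs.1 with h | h
          · have := hsmono (Set.left_mem_Icc.mpr ht₀Icc.1) hs h
            rw [hB1] at this; exact this.le
          · rw [← h, hB1]
        have hmono' : MonotoneOn u' (Set.Icc 0 t₀) := by
          apply monoAux (fun t ht => hu2 t (hsub ht))
          intro t ht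
          exact mul_nonneg (hq0 t (hsub (Set.mem_Icc_of_Ioo ht)))
            (hunn t (Set.mem_Icc_of_Ioo ht))
        have : u' 0 ≤ u' t₀ :=
          hmono' (Set.left_mem_Icc.mpr ht₀Icc.1) (Set.right_mem_Icc.mpr ht₀Icc.1)
            ht₀Icc.1
        rw [hB2] at this
        linarith
      have hsmono : StrictMonoOn u (Set.Icc 0 b) :=
        strictMonoAux hu1 (fun t ht => hu'pos t (Set.mem_Icc_of_Ioo ht))
      have hupos : ∀ t ∈ Set.Ioc 0 b, 0 < u t := by
        intro t ht
        have := hsmono (Set.left_mem_Icc.mpr hb.le) ⟨ht.1.le, ht.2⟩ ht.1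
        rwa [hB1] at this
      refine ⟨fun t ht => (hu'pos t ht).le, hupos, ?_⟩
      intro t ht
      rcases lt_or_eq_of_le ht.1 with h | h
      · exact (hupos t ⟨h, ht.2⟩).le
      · rw [← h, hB1]
  obtain ⟨hu'nn, hupos, hunn⟩ := key
  constructor
  · exact fun t ht => ⟨hupos t ht, hu'nn t ⟨ht.1.le, ht.2⟩⟩
  · -- the exponential estimate
    intro t ht
    have hub : 0 < u b := hupos b ⟨hb, le_rfl⟩
    have hsubcb : Set.Icc c b ⊆ Set.Icc 0 b := Set.Icc_subset_Icc hc0 le_rfl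
    have hcmem : c ∈ Set.Icc 0 b := ⟨hc0, hcb'⟩
    have hucnn : 0 ≤ u c := hunn c hcmem
    have hu'cnn : 0 ≤ u' c := hu'nn c hcmem
    -- G t = (u' t + lam * u t) * exp (-(lam * t)) is monotone on [c,b]
    set G : ℝ → ℝ := fun s => (u' s + lam * u s) * Real.exp (-(lam * s)) with hG
    have hGderiv : ∀ s ∈ Set.Icc c b,
        HasDerivAt G ((q s - lam^2) * u s * Real.exp (-(lam * s))) s := by
      intro s hs
      have h1 : HasDerivAt (fun x => u' x + lam * u x) (q s * u s + lam * u' s) s :=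
        (hu2 s (hsubcb hs)).add ((hu1 s (hsubcb hs)).const_mul lam)
      have h2 : HasDerivAt (fun x : ℝ => Real.exp (-(lam * x)))
          (Real.exp (-(lam * s)) * (-(lam * 1))) s :=
        (((hasDerivAt_id s).const_mul lam).neg).exp
      have := h1.mul h2
      refine this.congr_deriv ?_
      ring
    have hGmono : MonotoneOn G (Set.Icc c b) := by
      apply monoAux hGderiv
      intro s hs
      have hs' : s ∈ Set.Icc c b := Set.mem_Icc_of_Ioo hs
      have : 0 ≤ q s - lam^2 := sub_nonneg.mpr (hqc s hs')
      exact mul_nonneg (mul_nonneg this (hunn s (hsubcb hs'))) (Real.exp_pos _).le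
    have hGlb : ∀ s ∈ Set.Icc c b, lam * u c * Real.exp (lam * (s - c)) ≤ u' s + lam * u s := by
      intro s hs
      have h1 : G c ≤ G s := hGmono (Set.left_mem_Icc.mpr hcb') hs hs.1
      have h2 : lam * u c * Real.exp (-(lam * c)) ≤ G c := by
        simp only [hG]
        have : lam * u c ≤ u' c + lam * u c := by linarith
        exact mul_le_mul_of_nonneg_right this (Real.exp_pos _).le
      have h3 : lam * u c * Real.exp (-(lam * c)) ≤
          (u' s + lam * u s) * Real.exp (-(lam * s)) := le_trans h2 h1
      have hE : (0:ℝ) < Real.exp (lam * s) := Real.exp_pos _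
      have := mul_le_mul_of_nonneg_right h3 hE.le
      calc lam * u c * Real.exp (lam * (s - c))
          = lam * u c * Real.exp (-(lam * c)) * Real.exp (lam * s) := by
            rw [show Real.exp (lam * (s - c)) = Real.exp (-(lam * c)) * Real.exp (lam * s)
              from by rw [← Real.exp_add]; congr 1; ring]
            ring
        _ ≤ (u' s + lam * u s) * Real.exp (-(lam * s)) * Real.exp (lam * s) := this
        _ = u' s + lam * u s := by
            rw [mul_assoc, ← Real.exp_add, neg_add_cancel, Real.exp_zero, mul_one]
    -- X t = u t * exp (lam t) - (u c * exp(-(lam c))/2) * exp (2 lam t) is monotone on [c,b]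
    set K := u c * Real.exp (-(lam * c)) / 2 with hK
    set X : ℝ → ℝ := fun s => u s * Real.exp (lam * s) - K * Real.exp (2 * lam * s) with hX
    have hXderiv : ∀ s ∈ Set.Icc c b,
        HasDerivAt X ((u' s + lam * u s) * Real.exp (lam * s)
          - K * (2 * lam) * Real.exp (2 * lam * s)) s := by
      intro s hs
      have h1 : HasDerivAt (fun x : ℝ => Real.exp (lam * x))
          (Real.exp (lam * s) * (lam * 1)) s := ((hasDerivAt_id s).const_mul lam).exp
      have h2 : HasDerivAt (fun x : ℝ => Real.exp (2 * lam * x))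
          (Real.exp (2 * lam * s) * (2 * lam * 1)) s :=
        ((hasDerivAt_id s).const_mul (2 * lam)).exp
      have := ((hu1 s (hsubcb hs)).mul h1).sub (h2.const_mul K)
      refine this.congr_deriv ?_
      ring
    have hXmono : MonotoneOn X (Set.Icc c b) := by
      apply monoAux hXderiv
      intro s hs
      have hs' : s ∈ Set.Icc c b := Set.mem_Icc_of_Ioo hs
      have h1 := hGlb s hs'
      have hE : (0:ℝ) < Real.exp (lam * s) := Real.exp_pos _
      have h2 : lam * u c * Real.exp (lam * (s - c)) * Real.exp (lam * s) ≤
          (u' s + lam * u s) * Real.exp (lam * s) :=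
        mul_le_mul_of_nonneg_right h1 hE.le
      have h3 : lam * u c * Real.exp (lam * (s - c)) * Real.exp (lam * s)
          = K * (2 * lam) * Real.exp (2 * lam * s) := by
        rw [hK, mul_assoc (lam * u c), ← Real.exp_add]
        rw [show lam * (s - c) + lam * s = -(lam * c) + 2 * lam * s by ring]
        rw [Real.exp_add]
        ring
      linarith
    -- conclude : u b ≥ (u c / 2) * exp (lam * (b - c))
    have hXcb : X c ≤ X b := hXmono (Set.left_mem_Icc.mpr hcb') (Set.right_mem_Icc.mpr hcb') hcb'
    have hXc : X c = (u c / 2) * Real.exp (lam * c) := by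
      have he : Real.exp (-(lam * c)) * Real.exp (2 * lam * c) = Real.exp (lam * c) := by
        rw [← Real.exp_add]; congr 1; ring
      have h7 : K * Real.exp (2 * lam * c) = u c / 2 * Real.exp (lam * c) := by
        rw [hK, div_mul_eq_mul_div, mul_assoc, he]; ring
      simp only [hX]
      rw [h7]; ring
    have hkey : u c * Real.exp (lam * (b - c)) ≤ 2 * u b := by
      have hXb : u b * Real.exp (lam * b) - K * Real.exp (2 * lam * b) = X b := rfl
      have hXcnn : 0 ≤ X c := by
        rw [hXc]
        exact mul_nonneg (by linarith) (Real.exp_pos _).le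
      have h4 : K * Real.exp (2 * lam * b) ≤ u b * Real.exp (lam * b) := by
        have := le_trans hXcnn hXcb
        simp only [hX] at this
        linarith
      have h5 : K * Real.exp (2 * lam * b) =
          (u c / 2) * Real.exp (lam * (b - c)) * Real.exp (lam * b) := by
        have he2 : Real.exp (-(lam * c)) * Real.exp (2 * lam * b)
            = Real.exp (lam * (b - c)) * Real.exp (lam * b) := by
          rw [← Real.exp_add, ← Real.exp_add]; congr 1; ring
        rw [hK, div_mul_eq_mul_div, mul_assoc, he2]; ring
      rw [h5] at h4
      have hE : (0:ℝ) < Real.exp (lam * b) := Real.exp_pos _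
      have := (mul_le_mul_iff_of_pos_right hE).mp h4
      linarith
    -- finish
    have hmonou : MonotoneOn u (Set.Icc 0 b) :=
      monoAux hu1 (fun s hs => hu'nn s (Set.mem_Icc_of_Ioo hs))
    have htc : u t ≤ u c := hmonou ⟨ht.1, ht.2.trans hcb'⟩ hcmem ht.2
    rw [div_le_iff₀ hub]
    have hEpos : (0:ℝ) < Real.exp (lam * (b - c)) := Real.exp_pos _
    have hEneg : Real.exp (-lam * (b - c)) = (Real.exp (lam * (b - c)))⁻¹ := by
      rw [← Real.exp_neg]; ring_nf
    rw [hEneg]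
    rw [← sub_nonneg]
    have h6 : 2 * (Real.exp (lam * (b - c)))⁻¹ * u b - u t =
        ((2 * u b - u c * Real.exp (lam * (b - c))) + (u c - u t) * Real.exp (lam * (b - c)))
          * (Real.exp (lam * (b - c)))⁻¹ := by
      field_simp
      ring
    rw [h6]
    apply mul_nonneg
    · have : 0 ≤ (u c - u t) * Real.exp (lam * (b - c)) :=
        mul_nonneg (by linarith) hEpos.le
      linarith
    · exact (inv_pos.mpr hEpos).le
end

section
/- Let s, t ∈ ℝ with s ∈ (0,2K), t ∈ (−K',K'), k ∈ (0,1), and define R = k'·cn(t,k') / (k·cn(s,k) + dn(s,k)·dn(t,k')) and z = k·k'·sn(s,k)·sn(t,k') / (k·cn(s,k) + dn(s,k)·dn(t,k')). Then the map (s,t) ↦ 2K − s corresponds to inversion at the unit circle: if R̃, z̃ are obtained by replacing s with 2K−s, then (R̃, z̃) = (R, z)/(R² + z²). -/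
open Real

/-- In flat-ring coordinates, the map `s ↦ 2K − s` corresponds to inversion at the
unit circle.  Here `snk, cnk, dnk` (resp. `snk', cnk', dnk'`) are the Jacobi elliptic
functions with modulus `k` (resp. complementary modulus `k' = √(1−k²)`), characterized
by the fundamental identities `sn² + cn² = 1`, `dn² = 1 − (modulus)²·sn²`, and the
reflection identities `sn(2K−s) = sn s`, `cn(2K−s) = −cn s`, `dn(2K−s) = dn s`.
With `R = k'·cn(t,k')/(k·cn(s,k) + dn(s,k)·dn(t,k'))` and
`z = k·k'·sn(s,k)·sn(t,k')/(k·cn(s,k) + dn(s,k)·dn(t,k'))`, and `R̃, z̃` obtained by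
replacing `s` with `2K−s`, one has `(R̃, z̃) = (R, z)/(R² + z²)`. -/
theorem stmt15 (k K Kc s t : ℝ) (hk : k ∈ Set.Ioo (0:ℝ) 1)
    (hs : s ∈ Set.Ioo 0 (2*K)) (ht : t ∈ Set.Ioo (-Kc) Kc)
    (snk cnk dnk snk' cnk' dnk' : ℝ → ℝ)
    (hpythk : ∀ x, (snk x)^2 + (cnk x)^2 = 1)
    (hdnk : ∀ x, (dnk x)^2 = 1 - k^2 * (snk x)^2)
    (hpythk' : ∀ x, (snk' x)^2 + (cnk' x)^2 = 1)
    (hdnk' : ∀ x, (dnk' x)^2 = 1 - (1 - k^2) * (snk' x)^2)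
    (hsnref : snk (2*K - s) = snk s)
    (hcnref : cnk (2*K - s) = -cnk s)
    (hdnref : dnk (2*K - s) = dnk s)
    (R z Rt zt : ℝ)
    (hR : R = Real.sqrt (1 - k^2) * cnk' t / (k * cnk s + dnk s * dnk' t))
    (hz : z = k * Real.sqrt (1 - k^2) * snk s * snk' t / (k * cnk s + dnk s * dnk' t))
    (hRt : Rt = Real.sqrt (1 - k^2) * cnk' t / (k * cnk (2*K - s) + dnk (2*K - s) * dnk' t))
    (hzt : zt = k * Real.sqrt (1 - k^2) * snk (2*K - s) * snk' t /
      (k * cnk (2*K - s) + dnk (2*K - s) * dnk' t))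
    (hD : k * cnk s + dnk s * dnk' t ≠ 0)
    (hDt : k * cnk (2*K - s) + dnk (2*K - s) * dnk' t ≠ 0)
    (hnz : R^2 + z^2 ≠ 0) :
    Rt = R / (R^2 + z^2) ∧ zt = z / (R^2 + z^2) := by
  simp only [hsnref, hcnref, hdnref] at hRt hzt hDt
  have hk2 : (0:ℝ) < 1 - k^2 := by nlinarith [hk.1, hk.2]
  have hsq : Real.sqrt (1 - k^2) ^ 2 = 1 - k^2 := Real.sq_sqrt hk2.le
  set D := k * cnk s + dnk s * dnk' t with hDdef
  set Dt := k * -cnk s + dnk s * dnk' t with hDtdef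
  have hkey : D * Dt = (1 - k^2) * ((cnk' t)^2 + k^2 * (snk s)^2 * (snk' t)^2) := by
    have h1 := hpythk s
    have h2 := hpythk' t
    have h3 := hdnk s
    have h4 := hdnk' t
    linear_combination (dnk' t)^2 * h3 + (1 - k^2*(snk s)^2) * h4 - k^2 * h1 - (1-k^2) * h2
  have hratio : R^2 + z^2 = Dt / D := by
    rw [hR, hz, div_pow, div_pow, ← add_div, div_eq_div_iff (pow_ne_zero 2 hD) hD]
    linear_combination ((cnk' t)^2 + k^2*(snk s)^2*(snk' t)^2)*D*hsq - D*hkey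
  rw [hratio] at hnz ⊢
  have hDtne : Dt ≠ 0 := hDt
  constructor
  · rw [hRt, hR]; field_simp
  · rw [hzt, hz]; field_simp
end
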